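/- arXiv:2112.13636 — 2 statements merged into one kernel-verified Lean document; each statement's English description precedes it below -/
import Mathlib

section
/- Let H and V be complex Banach spaces, let (T(t))_{t≥0} be a strongly continuous semigroup on H, let (S(t))_{t≥0} be a strongly continuous semigroup on V, and let P(s) ∈ L(V,H), s ≥ 0, satisfy: s ↦ P(s)g is continuous on [0,∞) for every g ∈ V, and P(σ+s) = P(σ)S(s) for all σ, s ≥ 0. Define R(t)g := ∫₀^t T(t−σ)P(σ)g dσ (Bochner integral) for t ≥ 0, g ∈ V. Then each R(t) is a bounded linear operator from V to H, R(0) = 0, t ↦ R(t)g is continuous for every g ∈ V, and R(t+s) = T(t)R(s) + R(t)S(s) for all t, s ≥ 0. -/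
open Set Filter Topology

lemma bddOp {E F : Type*} [NormedAddCommGroup E] [NormedSpace ℂ E] [CompleteSpace E]
    [NormedAddCommGroup F] [NormedSpace ℂ F]
    (A : ℝ → E →L[ℂ] F) (hA : ∀ x, Continuous fun u => A u x) (a b : ℝ) :
    ∃ M : ℝ, 0 ≤ M ∧ ∀ u ∈ Set.Icc a b, ‖A u‖ ≤ M := by
  have h : ∀ x : E, ∃ C : ℝ, ∀ i : Set.Icc a b, ‖A i x‖ ≤ C := by
    intro x
    obtain ⟨C, hC⟩ := (isCompact_Icc (a := a) (b := b)).bddAbove_image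
      ((hA x).norm.continuousOn)
    exact ⟨C, fun i => hC ⟨i.1, i.2, rfl⟩⟩
  obtain ⟨C, hC⟩ := banach_steinhaus (g := fun u : Set.Icc a b => A u) h
  exact ⟨max C 0, le_max_right _ _, fun u hu => le_trans (hC ⟨u, hu⟩) (le_max_left _ _)⟩

lemma strongApplyCont {E F X : Type*} [NormedAddCommGroup E] [NormedSpace ℂ E] [CompleteSpace E]
    [NormedAddCommGroup F] [NormedSpace ℂ F] [TopologicalSpace X]
    (A : ℝ → E →L[ℂ] F) (hA : ∀ x, Continuous fun u => A u x)
    (φ : X → ℝ) (hφ : Continuous φ) (ψ : X → E) (hψ : Continuous ψ) :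
    Continuous fun x => A (φ x) (ψ x) := by
  rw [continuous_iff_continuousAt]
  intro x₀
  obtain ⟨M, hM0, hM⟩ := bddOp A hA (φ x₀ - 1) (φ x₀ + 1)
  have h1 : Tendsto (fun x => A (φ x) (ψ x₀)) (𝓝 x₀) (𝓝 (A (φ x₀) (ψ x₀))) :=
    ((hA (ψ x₀)).tendsto (φ x₀)).comp (hφ.tendsto x₀)
  have h2 : Tendsto (fun x => A (φ x) (ψ x - ψ x₀)) (𝓝 x₀) (𝓝 0) := by
    have hmem : ∀ᶠ x in 𝓝 x₀, φ x ∈ Set.Icc (φ x₀ - 1) (φ x₀ + 1) :=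
      (hφ.tendsto x₀) (Icc_mem_nhds (by linarith) (by linarith))
    have hev : ∀ᶠ x in 𝓝 x₀, ‖A (φ x) (ψ x - ψ x₀)‖ ≤ M * ‖ψ x - ψ x₀‖ := by
      filter_upwards [hmem] with x hx
      exact le_trans ((A (φ x)).le_opNorm _)
        (mul_le_mul_of_nonneg_right (hM _ hx) (norm_nonneg _))
    have hg : Tendsto (fun x => M * ‖ψ x - ψ x₀‖) (𝓝 x₀) (𝓝 0) := by
      have h0 : Tendsto (fun x => ψ x - ψ x₀) (𝓝 x₀) (𝓝 (ψ x₀ - ψ x₀)) :=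
        (hψ.tendsto x₀).sub tendsto_const_nhds
      have := (h0.norm).const_mul M
      simpa using this
    exact squeeze_zero_norm' hev hg
  have h3 := h1.add h2
  simp only [map_sub] at h3
  show Tendsto (fun x => A (φ x) (ψ x)) (𝓝 x₀) (𝓝 (A (φ x₀) (ψ x₀)))
  simpa using h3

/-- change-of-variables cocycle identity in the proof of
Proposition 3.3 of the paper.
Let `(T(t))_{t≥0}` and `(S(t))_{t≥0}` be strongly continuous semigroups on the complex
Banach spaces `H` and `V`, and let `P(s) ∈ L(V,H)` (`s ≥ 0`) be strongly continuous
and satisfy the intertwining relation `P(σ+s) = P(σ)S(s)`.  Then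
`R(t)g := ∫₀^t T(t−σ)P(σ)g dσ` defines bounded linear operators `R(t) : V → H` with
`R(0) = 0`, `t ↦ R(t)g` continuous on `[0,∞)`, and
`R(t+s) = T(t)R(s) + R(t)S(s)` for all `t, s ≥ 0`. -/
theorem stmt4 {H V : Type*}
    [NormedAddCommGroup H] [NormedSpace ℂ H] [CompleteSpace H]
    [NormedAddCommGroup V] [NormedSpace ℂ V] [CompleteSpace V]
    (T : ℝ → H →L[ℂ] H) (S : ℝ → V →L[ℂ] V)
    (hT0 : T 0 = ContinuousLinearMap.id ℂ H)
    (hTsg : ∀ t s : ℝ, 0 ≤ t → 0 ≤ s → T (t + s) = (T t).comp (T s))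
    (hTc : ∀ x : H, ContinuousOn (fun t => T t x) (Set.Ici 0))
    (hS0 : S 0 = ContinuousLinearMap.id ℂ V)
    (hSsg : ∀ t s : ℝ, 0 ≤ t → 0 ≤ s → S (t + s) = (S t).comp (S s))
    (hSc : ∀ g : V, ContinuousOn (fun t => S t g) (Set.Ici 0))
    (P : ℝ → V →L[ℂ] H)
    (hPc : ∀ g : V, ContinuousOn (fun s => P s g) (Set.Ici 0))
    (hPint : ∀ σ s : ℝ, 0 ≤ σ → 0 ≤ s → P (σ + s) = (P σ).comp (S s)) :
    -- each `R(t)` is a bounded linear operator from `V` to `H`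
    (∀ t : ℝ, 0 ≤ t → ∃ Rt : V →L[ℂ] H, ∀ g : V,
        Rt g = ∫ σ in (0:ℝ)..t, T (t - σ) (P σ g)) ∧
    -- `R(0) = 0`
    (∀ g : V, (∫ σ in (0:ℝ)..(0:ℝ), T (0 - σ) (P σ g)) = 0) ∧
    -- strong continuity of `t ↦ R(t)g`
    (∀ g : V, ContinuousOn
        (fun t => ∫ σ in (0:ℝ)..t, T (t - σ) (P σ g)) (Set.Ici 0)) ∧
    -- the cocycle identity `R(t+s) = T(t)R(s) + R(t)S(s)`
    (∀ t s : ℝ, 0 ≤ t → 0 ≤ s → ∀ g : V,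
        (∫ σ in (0:ℝ)..(t + s), T (t + s - σ) (P σ g)) =
          T t (∫ σ in (0:ℝ)..s, T (s - σ) (P σ g)) +
            ∫ σ in (0:ℝ)..t, T (t - σ) (P σ (S s g))) := by
  have hmax : Continuous fun u : ℝ => max u 0 := continuous_id.max continuous_const
  set T' : ℝ → H →L[ℂ] H := fun u => T (max u 0) with hT'def
  set P' : ℝ → V →L[ℂ] H := fun u => P (max u 0) with hP'def
  have hT'c : ∀ x, Continuous fun u => T' u x :=
    fun x => (hTc x).comp_continuous hmax (fun u => le_max_right u 0)
  have hP'c : ∀ g, Continuous fun u => P' u g :=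
    fun g => (hPc g).comp_continuous hmax (fun u => le_max_right u 0)
  have hG : ∀ g : V, Continuous fun p : ℝ × ℝ => T' (p.1 - p.2) (P' p.2 g) := fun g =>
    strongApplyCont T' hT'c (fun p : ℝ × ℝ => p.1 - p.2) (continuous_fst.sub continuous_snd)
      (fun p : ℝ × ℝ => P' p.2 g) ((hP'c g).comp continuous_snd)
  have hGt : ∀ (g : V) (t : ℝ), Continuous fun σ => T' (t - σ) (P' σ g) :=
    fun g t => (hG g).comp (continuous_const.prodMk continuous_id)
  have hcongr : ∀ (g : V) (t : ℝ), 0 ≤ t →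
      (∫ σ in (0:ℝ)..t, T (t - σ) (P σ g)) = ∫ σ in (0:ℝ)..t, T' (t - σ) (P' σ g) := by
    intro g t ht
    apply intervalIntegral.integral_congr
    intro σ hσ
    rw [Set.uIcc_of_le ht] at hσ
    have h1 : max (t - σ) 0 = t - σ := max_eq_left (by linarith [hσ.2])
    have h2 : max σ 0 = σ := max_eq_left hσ.1
    simp only [hT'def, hP'def, h1, h2]
  refine ⟨?_, ?_, ?_, ?_⟩
  · -- boundedness
    intro t ht
    obtain ⟨M, hM0, hM⟩ := bddOp T' hT'c 0 t
    obtain ⟨N, hN0, hN⟩ := bddOp P' hP'c 0 t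
    refine ⟨LinearMap.mkContinuous
      { toFun := fun g => ∫ σ in (0:ℝ)..t, T' (t - σ) (P' σ g)
        map_add' := ?_
        map_smul' := ?_ } (M * N * t) ?_, ?_⟩
    · intro g g'
      have h1 : (∫ σ in (0:ℝ)..t, T' (t - σ) (P' σ (g + g'))) =
          ∫ σ in (0:ℝ)..t, (T' (t - σ) (P' σ g) + T' (t - σ) (P' σ g')) := by
        apply intervalIntegral.integral_congr
        intro σ _
        simp [map_add]
      rw [h1]
      exact intervalIntegral.integral_add ((hGt g t).intervalIntegrable 0 t)
        ((hGt g' t).intervalIntegrable 0 t)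
    · intro c g
      have h1 : (∫ σ in (0:ℝ)..t, T' (t - σ) (P' σ (c • g))) =
          ∫ σ in (0:ℝ)..t, c • T' (t - σ) (P' σ g) := by
        apply intervalIntegral.integral_congr
        intro σ _
        simp [map_smul]
      rw [h1]
      simpa using intervalIntegral.integral_smul c (fun σ => T' (t - σ) (P' σ g))
    · intro g
      have hb : ∀ σ ∈ Set.uIoc (0:ℝ) t, ‖T' (t - σ) (P' σ g)‖ ≤ M * (N * ‖g‖) := by
        intro σ hσ
        rw [Set.uIoc_of_le ht] at hσ
        have h1 : t - σ ∈ Set.Icc (0:ℝ) t := ⟨by linarith [hσ.2], by linarith [hσ.1]⟩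
        have h2 : σ ∈ Set.Icc (0:ℝ) t := ⟨hσ.1.le, hσ.2⟩
        calc ‖T' (t - σ) (P' σ g)‖ ≤ ‖T' (t - σ)‖ * ‖P' σ g‖ :=
              (T' (t - σ)).le_opNorm _
          _ ≤ M * (N * ‖g‖) := by
              apply mul_le_mul (hM _ h1) ?_ (norm_nonneg _) hM0
              exact le_trans ((P' σ).le_opNorm g)
                (mul_le_mul_of_nonneg_right (hN _ h2) (norm_nonneg g))
      have hle := intervalIntegral.norm_integral_le_of_norm_le_const hb
      calc ‖∫ σ in (0:ℝ)..t, T' (t - σ) (P' σ g)‖ ≤ M * (N * ‖g‖) * |t - 0| := hle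
        _ = M * N * t * ‖g‖ := by rw [sub_zero, abs_of_nonneg ht]; ring
    · intro g
      rw [LinearMap.mkContinuous_apply]
      exact (hcongr g t ht).symm
  · intro g
    simp
  · -- strong continuity
    intro g
    have huncurry : Continuous (Function.uncurry fun t σ => T' (t - σ) (P' σ g)) := hG g
    have hcont2 : Continuous fun t : ℝ => ∫ σ in (0:ℝ)..t, T' (t - σ) (P' σ g) :=
      intervalIntegral.continuous_parametric_intervalIntegral_of_continuous
        huncurry continuous_id
    exact hcont2.continuousOn.congr fun t ht => hcongr g t ht
  · -- cocycle identity
    intro t s ht hs g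
    have hts : (0:ℝ) ≤ t + s := by linarith
    have hint1 : IntervalIntegrable (fun σ => T' (t + s - σ) (P' σ g))
        MeasureTheory.volume 0 s := (hGt g (t + s)).intervalIntegrable 0 s
    have hint2 : IntervalIntegrable (fun σ => T' (t + s - σ) (P' σ g))
        MeasureTheory.volume s (t + s) := (hGt g (t + s)).intervalIntegrable s (t + s)
    have hsplit : (∫ σ in (0:ℝ)..(t + s), T' (t + s - σ) (P' σ g)) =
        (∫ σ in (0:ℝ)..s, T' (t + s - σ) (P' σ g)) +
          ∫ σ in s..(t + s), T' (t + s - σ) (P' σ g) :=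
      (intervalIntegral.integral_add_adjacent_intervals hint1 hint2).symm
    have hfirst : (∫ σ in (0:ℝ)..s, T' (t + s - σ) (P' σ g)) =
        T t (∫ σ in (0:ℝ)..s, T (s - σ) (P σ g)) := by
      have e1 : (∫ σ in (0:ℝ)..s, T' (t + s - σ) (P' σ g)) =
          ∫ σ in (0:ℝ)..s, T t (T' (s - σ) (P' σ g)) := by
        apply intervalIntegral.integral_congr
        intro σ hσ
        rw [Set.uIcc_of_le hs] at hσ
        have h1 : max (t + s - σ) 0 = t + s - σ := max_eq_left (by linarith [hσ.2])
        have h2 : max (s - σ) 0 = s - σ := max_eq_left (by linarith [hσ.2])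
        simp only [hT'def, h1, h2]
        have h3 : t + s - σ = t + (s - σ) := by ring
        rw [h3, hTsg t (s - σ) ht (by linarith [hσ.2])]
        rfl
      rw [e1, (T t).intervalIntegral_comp_comm ((hGt g s).intervalIntegrable 0 s)]
      rw [hcongr g s hs]
    have hsecond : (∫ σ in s..(t + s), T' (t + s - σ) (P' σ g)) =
        ∫ σ in (0:ℝ)..t, T (t - σ) (P σ (S s g)) := by
      have e2 : (∫ τ in (0:ℝ)..t, T' (t + s - (τ + s)) (P' (τ + s) g)) =
          ∫ σ in s..(t + s), T' (t + s - σ) (P' σ g) := by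
        have := intervalIntegral.integral_comp_add_right
          (a := (0:ℝ)) (b := t) (fun σ => T' (t + s - σ) (P' σ g)) s
        simpa using this
      rw [← e2]
      apply intervalIntegral.integral_congr
      intro τ hτ
      rw [Set.uIcc_of_le ht] at hτ
      have h1 : t + s - (τ + s) = t - τ := by ring
      have h2 : max (t - τ) 0 = t - τ := max_eq_left (by linarith [hτ.2])
      have h3 : max (τ + s) 0 = τ + s := max_eq_left (by linarith [hτ.1])
      simp only [hT'def, hP'def, h1, h2, h3]
      rw [hPint τ s hτ.1 hs]
      rfl
    rw [hcongr g (t + s) hts, hsplit, hfirst, hsecond]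
end

section
/- Let H and 𝒰 be complex Hilbert spaces, r > 0, 𝒵 a linear subspace of H, A_m : 𝒵 → H and G : 𝒵 → 𝒰 linear maps, λ ∈ ℂ, and 𝔻_λ : 𝒰 → H a linear map whose range is contained in {x ∈ 𝒵 : A_m x = λ x}, with G(𝔻_λ u) = u for every u ∈ 𝒰 and x = 𝔻_λ(G x) for every x ∈ 𝒵 with A_m x = λ x. Let L be a linear map from continuously differentiable 𝒰-valued functions on [−r,0] into 𝒰, and for v ∈ 𝒰 let e_λ v denote the function θ ↦ e^{λθ} v on [−r,0]. Then for x ∈ 𝒵 and continuously differentiable g : [−r,0] → 𝒰 with G x = L g, one has A_m x = λ x and g′(θ) = λ g(θ) for all θ ∈ [−r,0] if and only if g = e_λ(g(0)) and x = 𝔻_λ(L(e_λ (g(0)))). Consequently, for every v ∈ 𝒰 the pair (𝔻_λ(L(e_λ v)), e_λ v) is the unique element (x,g) of {(x,g) : x ∈ 𝒵, g continuously differentiable, G x = L g, A_m x = λ x, g′ = λ g} with g(0) = v. -/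
lemma expDeriv (lam : ℂ) (θ : ℝ) :
    HasDerivAt (fun t : ℝ => Complex.exp (lam * t)) (lam * Complex.exp (lam * θ)) θ := by
  have h : HasDerivAt (fun t : ℝ => lam * (t : ℂ)) lam θ := by
    simpa using (Complex.ofRealCLM.hasDerivAt (x := θ)).const_mul lam
  simpa [mul_comm] using h.cexp

lemma ode_sol {𝒰 : Type*} [NormedAddCommGroup 𝒰] [NormedSpace ℂ 𝒰]
    (r : ℝ) (hr : 0 < r) (lam : ℂ) (g : ℝ → 𝒰)
    (hg : ∀ θ ∈ Set.Icc (-r) 0, HasDerivWithinAt g (lam • g θ) (Set.Icc (-r) 0) θ) :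
    ∀ θ ∈ Set.Icc (-r) 0, g θ = Complex.exp (lam * θ) • g 0 := by
  set f : ℝ → 𝒰 := fun θ => Complex.exp (-(lam * θ)) • g θ with hf
  have h0 : (0 : ℝ) ∈ Set.Icc (-r) 0 := by constructor <;> linarith
  have hderiv : ∀ θ ∈ Set.Icc (-r) 0,
      HasDerivWithinAt f ((fun _ => (0 : 𝒰)) θ) (Set.Icc (-r) 0) θ := by
    intro θ hθ
    have hc : HasDerivWithinAt (fun t : ℝ => Complex.exp (-(lam * t)))
        (-lam * Complex.exp (-(lam * θ))) (Set.Icc (-r) 0) θ := by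
      have := (expDeriv (-lam) θ).hasDerivWithinAt (s := Set.Icc (-r) 0)
      simpa [neg_mul] using this
    have := hc.smul (hg θ hθ)
    convert this using 1
    · rfl
    simp [smul_smul]
    ring_nf
    module
  intro θ hθ
  have hb : ∀ x ∈ Set.Icc (-r) 0, ‖(fun _ => (0 : 𝒰)) x‖ ≤ (0 : ℝ) := by
    intro x _; simp
  have hle := (convex_Icc (-r) 0).norm_image_sub_le_of_norm_hasDerivWithin_le
    hderiv hb h0 hθ
  have hcon : f θ = f 0 := by
    have : ‖f θ - f 0‖ ≤ 0 := by simpa using hle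
    have := le_antisymm this (norm_nonneg _)
    simpa [sub_eq_zero] using this
  have h1 : Complex.exp (lam * θ) • f θ = g θ := by
    simp [hf, smul_smul, ← Complex.exp_add]
  have h2 : Complex.exp (lam * θ) • f 0 = Complex.exp (lam * θ) • g 0 := by
    simp [hf]
  rw [← h1, hcon, h2]

lemma eDeriv {𝒰 : Type*} [NormedAddCommGroup 𝒰] [NormedSpace ℂ 𝒰]
    (r : ℝ) (lam : ℂ) (v : 𝒰) :
    ∀ θ ∈ Set.Icc (-r) 0,
      HasDerivWithinAt (fun θ : ℝ => Complex.exp (lam * θ) • v)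
        (lam • (Complex.exp (lam * θ) • v)) (Set.Icc (-r) 0) θ := by
  intro θ _
  have := ((expDeriv lam θ).smul_const v).hasDerivWithinAt (s := Set.Icc (-r) 0)
  simpa [smul_smul] using this

lemma eSmooth {𝒰 : Type*} [NormedAddCommGroup 𝒰] [NormedSpace ℂ 𝒰]
    (r : ℝ) (lam : ℂ) (v : 𝒰) :
    ContDiffOn ℝ 1 (fun θ : ℝ => Complex.exp (lam * θ) • v) (Set.Icc (-r) 0) := by
  have h1 : ContDiff ℝ 1 (fun θ : ℝ => lam * (θ : ℂ)) :=
    contDiff_const.mul Complex.ofRealCLM.contDiff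
  have h2 : ContDiff ℝ 1 (fun θ : ℝ => Complex.exp (lam * θ)) :=
    ((Complex.contDiff_exp (𝕜 := ℂ)).restrict_scalars ℝ).comp h1
  exact (((ContinuousLinearMap.toSpanSingleton ℂ v).restrictScalars ℝ).contDiff.comp h2).contDiffOn



/-- equation (3.8) in the proof of Theorem 3.5 of the paper:
computation of the Dirichlet operator of the augmented delay system.
With `e_λ v = (θ ↦ e^{λθ} v)`, for `x ∈ 𝒵` and a continuously differentiable
`g : [−r,0] → 𝒰` with `G x = L g`, one has `A_m x = λ x` and `g′ = λ g` on `[−r,0]`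
iff `g = e_λ (g 0)` on `[−r,0]` and `x = 𝔻_λ (L (e_λ (g 0)))`.
Consequently `(𝔻_λ (L (e_λ v)), e_λ v)` is the unique element `(x,g)` of
`ker (λ − 𝒜_m)` with `g 0 = v`. -/
theorem stmt5
    {H 𝒰 : Type*} [NormedAddCommGroup H] [InnerProductSpace ℂ H] [CompleteSpace H]
    [NormedAddCommGroup 𝒰] [InnerProductSpace ℂ 𝒰] [CompleteSpace 𝒰]
    (r : ℝ) (hr : 0 < r)
    (𝒵 : Submodule ℂ H) (Am : 𝒵 →ₗ[ℂ] H) (G : 𝒵 →ₗ[ℂ] 𝒰) (lam : ℂ)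
    -- the Dirichlet operator `𝔻 = 𝔻_λ : 𝒰 → H`
    (𝔻 : 𝒰 →ₗ[ℂ] H)
    (h𝔻1 : ∀ u : 𝒰, ∃ z : 𝒵, (z : H) = 𝔻 u ∧ Am z = lam • (z : H) ∧ G z = u)
    (h𝔻2 : ∀ z : 𝒵, Am z = lam • (z : H) → 𝔻 (G z) = (z : H))
    -- the delay operator `L`, defined on continuously differentiable functions and
    -- depending only on the values on `[−r,0]`
    (L : (ℝ → 𝒰) →ₗ[ℂ] 𝒰)
    (hLres : ∀ g₁ g₂ : ℝ → 𝒰, (∀ θ ∈ Set.Icc (-r) 0, g₁ θ = g₂ θ) → L g₁ = L g₂) :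
    -- the equivalence
    (∀ (x : 𝒵) (g : ℝ → 𝒰), ContDiffOn ℝ 1 g (Set.Icc (-r) 0) → G x = L g →
      ((Am x = lam • (x : H) ∧
          ∀ θ ∈ Set.Icc (-r) 0,
            HasDerivWithinAt g (lam • g θ) (Set.Icc (-r) 0) θ) ↔
        ((∀ θ ∈ Set.Icc (-r) 0, g θ = Complex.exp (lam * (θ : ℂ)) • g 0) ∧
          (x : H) = 𝔻 (L (fun θ : ℝ => Complex.exp (lam * (θ : ℂ)) • g 0))))) ∧
    -- existence and uniqueness
    (∀ v : 𝒰,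
      (∃ (x : 𝒵) (g : ℝ → 𝒰),
        ContDiffOn ℝ 1 g (Set.Icc (-r) 0) ∧ G x = L g ∧
        Am x = lam • (x : H) ∧
        (∀ θ ∈ Set.Icc (-r) 0,
          HasDerivWithinAt g (lam • g θ) (Set.Icc (-r) 0) θ) ∧
        g 0 = v ∧ g = (fun θ : ℝ => Complex.exp (lam * (θ : ℂ)) • v) ∧
        (x : H) = 𝔻 (L (fun θ : ℝ => Complex.exp (lam * (θ : ℂ)) • v))) ∧
      (∀ (x₁ x₂ : 𝒵) (g₁ g₂ : ℝ → 𝒰),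
        ContDiffOn ℝ 1 g₁ (Set.Icc (-r) 0) → G x₁ = L g₁ →
        Am x₁ = lam • (x₁ : H) →
        (∀ θ ∈ Set.Icc (-r) 0,
          HasDerivWithinAt g₁ (lam • g₁ θ) (Set.Icc (-r) 0) θ) →
        g₁ 0 = v →
        ContDiffOn ℝ 1 g₂ (Set.Icc (-r) 0) → G x₂ = L g₂ →
        Am x₂ = lam • (x₂ : H) →
        (∀ θ ∈ Set.Icc (-r) 0,
          HasDerivWithinAt g₂ (lam • g₂ θ) (Set.Icc (-r) 0) θ) →
        g₂ 0 = v →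
        x₁ = x₂ ∧ ∀ θ ∈ Set.Icc (-r) 0, g₁ θ = g₂ θ)) := by
  
  have h0mem : (0 : ℝ) ∈ Set.Icc (-r) 0 := by constructor <;> linarith
  have main : ∀ (x : 𝒵) (g : ℝ → 𝒰), ContDiffOn ℝ 1 g (Set.Icc (-r) 0) → G x = L g →
      ((Am x = lam • (x : H) ∧
          ∀ θ ∈ Set.Icc (-r) 0,
            HasDerivWithinAt g (lam • g θ) (Set.Icc (-r) 0) θ) ↔
        ((∀ θ ∈ Set.Icc (-r) 0, g θ = Complex.exp (lam * (θ : ℂ)) • g 0) ∧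
          (x : H) = 𝔻 (L (fun θ : ℝ => Complex.exp (lam * (θ : ℂ)) • g 0)))) := by
    intro x g _ hGx
    constructor
    · rintro ⟨hA, hD⟩
      have hgeq := ode_sol r hr lam g hD
      refine ⟨hgeq, ?_⟩
      have hL : L g = L (fun θ : ℝ => Complex.exp (lam * (θ : ℂ)) • g 0) :=
        hLres _ _ hgeq
      rw [← h𝔻2 x hA, hGx, hL]
    · rintro ⟨hgeq, hx⟩
      obtain ⟨z, hz1, hz2, _⟩ := h𝔻1 (L (fun θ : ℝ => Complex.exp (lam * (θ : ℂ)) • g 0))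
      have hxz : x = z := Subtype.ext (by rw [hx, ← hz1])
      refine ⟨by rw [hxz]; exact hz2, ?_⟩
      intro θ hθ
      have := (eDeriv r lam (g 0) θ hθ).congr hgeq (hgeq θ hθ)
      rwa [← hgeq θ hθ] at this
  refine ⟨main, ?_⟩
  intro v
  constructor
  · obtain ⟨z, hz1, hz2, hz3⟩ := h𝔻1 (L (fun θ : ℝ => Complex.exp (lam * (θ : ℂ)) • v))
    refine ⟨z, fun θ : ℝ => Complex.exp (lam * (θ : ℂ)) • v, eSmooth r lam v,
      hz3, hz2, ?_, by simp, ?_, hz1⟩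
    · exact fun θ hθ => eDeriv r lam v θ hθ
    · funext θ; simp
  · intro x₁ x₂ g₁ g₂ hs₁ hG₁ hA₁ hD₁ h0₁ hs₂ hG₂ hA₂ hD₂ h0₂
    obtain ⟨he₁, hx₁⟩ := (main x₁ g₁ hs₁ hG₁).mp ⟨hA₁, hD₁⟩
    obtain ⟨he₂, hx₂⟩ := (main x₂ g₂ hs₂ hG₂).mp ⟨hA₂, hD₂⟩
    rw [h0₁] at he₁ hx₁
    rw [h0₂] at he₂ hx₂
    refine ⟨Subtype.ext (by rw [hx₁, hx₂]), fun θ hθ => ?_⟩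
    rw [he₁ θ hθ, he₂ θ hθ]
end
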